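/- Under the uniform prior over partitions of {1,…,K}, conditional on the first j elements forming ℓ distinct blocks, the probability that element j+1 starts a new block is B_{K−j−1, ℓ+1} / (B_{K−j−1, ℓ+1} + ℓ·B_{K−j−1, ℓ}); equivalently, the number of partitions of {1,…,K} extending a given partition of {1,…,j} into ℓ blocks in which element j+1 is in a new block is B_{K−j−1, ℓ+1}, and the number in which it joins a specified existing block is B_{K−j−1, ℓ}. -/

import Mathlib

/-- Stirling numbers of the second kind, via the recurrence
`S(n+1, k+1) = (k+1)·S(n, k+1) + S(n, k)`. -/
def stirling : ℕ → ℕ → ℕ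
  | 0, 0 => 1
  | 0, _ + 1 => 0
  | _ + 1, 0 => 0
  | n + 1, k + 1 => (k + 1) * stirling n (k + 1) + stirling n k

/-- Auxiliary function: `rstirlingAux r m k = S_r(m + r, k)`, defined by the r-Stirling
recurrence with base case `S_r(r, k) = [k = r]`. -/
def rstirlingAux (r : ℕ) : ℕ → ℕ → ℕ
  | 0, k => if k = r then 1 else 0
  | _ + 1, 0 => 0
  | m + 1, k + 1 => (k + 1) * rstirlingAux r m (k + 1) + rstirlingAux r m k

/-- The r-Stirling numbers of the second kind `S_r(n, k)`: the number of partitions of an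
`n`-element set into `k` nonempty blocks such that the first `r` elements lie in distinct
blocks, defined here through the standard recurrence. -/
def rstirling (r n k : ℕ) : ℕ := if r ≤ n then rstirlingAux r (n - r) k else 0

/-- The r-Bell number `B_{n, r} = Σ_{i=0}^{n} S_r(n + r, i + r)`. -/
def rbell (n r : ℕ) : ℕ := ∑ i ∈ Finset.range (n + 1), rstirling r (n + r) (i + r)

open Finset

lemma rbell_eq (n r : ℕ) : rbell n r = ∑ i ∈ Finset.range (n + 1), rstirlingAux r n (i + r) := by
  simp [rbell, rstirling, Nat.le_add_left]

lemma aux_eq_zero_of_lt (r : ℕ) : ∀ m k, k < r → rstirlingAux r m k = 0 := by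
  intro m
  induction m with
  | zero => intro k hk; simp [rstirlingAux]; omega
  | succ m ih =>
    intro k hk
    match k with
    | 0 => simp [rstirlingAux]
    | k + 1 => simp [rstirlingAux, ih _ (by omega : k < r), ih _ hk]

lemma aux_eq_zero_of_gt (r : ℕ) : ∀ m k, m + r < k → rstirlingAux r m k = 0 := by
  intro m
  induction m with
  | zero => intro k hk; simp [rstirlingAux]; omega
  | succ m ih =>
    intro k hk
    match k with
    | 0 => simp [rstirlingAux]
    | k + 1 => simp [rstirlingAux, ih (k+1) (by omega), ih k (by omega)]

lemma aux_succ (r : ℕ) : ∀ m k, rstirlingAux r (m + 1) k =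
    rstirlingAux (r + 1) m k + r * rstirlingAux r m k := by
  intro m
  induction m with
  | zero =>
    intro k
    match k with
    | 0 =>
      simp only [rstirlingAux]
      split_ifs <;> simp_all <;> omega
    | k + 1 =>
      simp only [rstirlingAux]
      split_ifs <;> simp_all <;> omega
  | succ m ih =>
    intro k
    match k with
    | 0 => simp [rstirlingAux]
    | k + 1 =>
      show (k+1) * rstirlingAux r (m+1) (k+1) + rstirlingAux r (m+1) k
        = ((k+1) * rstirlingAux (r+1) m (k+1) + rstirlingAux (r+1) m k)
          + r * ((k+1) * rstirlingAux r m (k+1) + rstirlingAux r m k)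
      rw [ih (k+1), ih k]
      ring

lemma rbell_zero (r : ℕ) : rbell 0 r = 1 := by
  simp [rbell_eq, rstirlingAux]

lemma rbell_succ (d r : ℕ) : rbell (d + 1) r = rbell d (r + 1) + r * rbell d r := by
  rw [rbell_eq]
  have h1 : ∀ i ∈ Finset.range (d + 2), rstirlingAux r (d + 1) (i + r) =
      rstirlingAux (r + 1) d (i + r) + r * rstirlingAux r d (i + r) := fun i _ => aux_succ r d _
  rw [Finset.sum_congr rfl h1, Finset.sum_add_distrib, ← Finset.mul_sum]
  congr 1
  · rw [Finset.sum_range_succ' (fun i => rstirlingAux (r+1) d (i + r))]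
    have h0 : ∀ k : ℕ, k + 1 + r = k + (r + 1) := fun k => by omega
    simp only [zero_add, aux_eq_zero_of_lt (r+1) d r (by omega), add_zero, rbell_eq, h0]
  · rw [Finset.sum_range_succ, aux_eq_zero_of_gt r d (d + 1 + r) (by omega), add_zero, rbell_eq]

variable {α : Type*} [Fintype α] [DecidableEq α]

noncomputable instance setoidFinite (β : Type*) [Finite β] : Finite (Setoid β) :=
  Finite.of_injective (fun s : Setoid β => s.r)
    (fun s t h => Setoid.ext fun a b => by rw [show s.r = t.r from h])

def SamePart' (ρ : Finpartition (univ : Finset α)) (i j : α) : Prop :=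
  ∃ b ∈ ρ.parts, i ∈ b ∧ j ∈ b

lemma samePart'_iff_mem_part (ρ : Finpartition (univ : Finset α)) (i j : α) :
    SamePart' ρ i j ↔ j ∈ ρ.part i := by
  constructor
  · rintro ⟨b, hb, hi, hj⟩
    rwa [Finpartition.eq_of_mem_parts ρ (ρ.part_mem.2 (mem_univ i)) hb (ρ.mem_part (mem_univ i)) hi]
  · intro h
    exact ⟨ρ.part i, ρ.part_mem.2 (mem_univ i), ρ.mem_part (mem_univ i), h⟩

/-- The same-block setoid of a finpartition. -/
def partSetoid (ρ : Finpartition (univ : Finset α)) : Setoid α where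
  r := SamePart' ρ
  iseqv := by
    constructor
    · intro a
      obtain ⟨t, ht, hat⟩ := ρ.exists_mem (mem_univ a)
      exact ⟨t, ht, hat, hat⟩
    · rintro a b ⟨t, ht, h1, h2⟩; exact ⟨t, ht, h2, h1⟩
    · rintro a b c ⟨t, ht, h1, h2⟩ ⟨u, hu, h3, h4⟩
      exact ⟨t, ht, h1, by rwa [Finpartition.eq_of_mem_parts ρ ht hu h2 h3]⟩

lemma partSetoid_r (ρ : Finpartition (univ : Finset α)) (i j : α) :
    (partSetoid ρ).r i j ↔ j ∈ ρ.part i := samePart'_iff_mem_part ρ i j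

lemma parts_eq_image_part (ρ : Finpartition (univ : Finset α)) :
    ρ.parts = univ.image ρ.part := by
  ext t
  simp only [mem_image, mem_univ, true_and]
  constructor
  · intro ht
    obtain ⟨a, hat⟩ := ρ.nonempty_of_mem_parts ht
    exact ⟨a, (Finpartition.eq_of_mem_parts ρ (ρ.part_mem.2 (mem_univ a)) ht
      (ρ.mem_part (mem_univ a)) hat)⟩
  · rintro ⟨a, rfl⟩; exact ρ.part_mem.2 (mem_univ a)

lemma partSetoid_injective : Function.Injective (partSetoid (α := α)) := by
  intro ρ₁ ρ₂ h
  have hpart : ∀ a, ρ₁.part a = ρ₂.part a := by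
    intro a
    ext j
    rw [← samePart'_iff_mem_part, ← samePart'_iff_mem_part]
    show (partSetoid ρ₁).r a j ↔ (partSetoid ρ₂).r a j
    rw [h]
  ext t
  rw [parts_eq_image_part, parts_eq_image_part]
  simp [hpart]

lemma partSetoid_ofSetoid (s : Setoid α) [DecidableRel s.r] :
    partSetoid (Finpartition.ofSetoid s) = s := by
  refine Setoid.ext fun a b => ?_
  rw [show (partSetoid (Finpartition.ofSetoid s)) a b ↔ _ from partSetoid_r _ a b,
    Finpartition.mem_part_ofSetoid_iff_rel]

/-- The equivalence between finpartitions of `univ` and setoids. -/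
noncomputable def finpartitionEquivSetoid :
    Finpartition (univ : Finset α) ≃ Setoid α where
  toFun := partSetoid
  invFun s := @Finpartition.ofSetoid _ _ _ s (Classical.decRel s.r)
  left_inv ρ := partSetoid_injective (by rw [@partSetoid_ofSetoid _ _ _ _ (Classical.decRel _)])
  right_inv s := @partSetoid_ofSetoid _ _ _ s (Classical.decRel _)

lemma card_quotient_partSetoid (ρ : Finpartition (univ : Finset α)) :
    Nat.card (Quotient (partSetoid ρ)) = ρ.parts.card := by
  have hresp : ∀ a b : α, (partSetoid ρ).r a b → ρ.part a = ρ.part b := by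
    intro a b hab
    rw [partSetoid_r] at hab
    exact Finpartition.eq_of_mem_parts ρ (ρ.part_mem.2 (mem_univ a)) (ρ.part_mem.2 (mem_univ b)) hab
      (ρ.mem_part (mem_univ b))
  let f : Quotient (partSetoid ρ) → {t // t ∈ ρ.parts} :=
    Quotient.lift (fun a => ⟨ρ.part a, ρ.part_mem.2 (mem_univ a)⟩)
      (fun a b hab => Subtype.ext (hresp a b hab))
  have hbij : Function.Bijective f := by
    constructor
    · rintro ⟨a⟩ ⟨b⟩ hab
      refine Quotient.sound ?_
      show (partSetoid ρ).r a b
      rw [partSetoid_r ρ a b,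
        show ρ.part a = ρ.part b from congrArg Subtype.val hab]
      exact ρ.mem_part (mem_univ b)
    · rintro ⟨t, ht⟩
      obtain ⟨a, hat⟩ := ρ.nonempty_of_mem_parts ht
      refine ⟨⟦a⟧, Subtype.ext ?_⟩
      exact Finpartition.eq_of_mem_parts ρ (ρ.part_mem.2 (mem_univ a)) ht
        (ρ.mem_part (mem_univ a)) hat
  rw [Nat.card_eq_of_bijective f hbij]
  simp


lemma nat_card_sigma {ι : Type*} [Fintype ι] (f : ι → Type*) [∀ i, Finite (f i)] :
    Nat.card (Σ i, f i) = ∑ i, Nat.card (f i) := by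
  letI : ∀ i, Fintype (f i) := fun i => Fintype.ofFinite (f i)
  simp [Nat.card_eq_fintype_card, Fintype.card_sigma]

lemma nat_card_option (α : Type*) [Finite α] : Nat.card (Option α) = Nat.card α + 1 := by
  letI := Fintype.ofFinite α
  simp [Nat.card_eq_fintype_card]

/-- `s`, a setoid on `Fin K`, extends `s₀`, a setoid on `Fin m`. -/
def ExtS {m K : ℕ} (h : m ≤ K) (s : Setoid (Fin K)) (s₀ : Setoid (Fin m)) : Prop :=
  ∀ a b : Fin m, s.r (Fin.castLE h a) (Fin.castLE h b) ↔ s₀.r a b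

/-- Extend a setoid on `Fin m` to `Fin (m+1)` by putting `m` in a new class. -/
def extNone {m : ℕ} (s₀ : Setoid (Fin m)) : Setoid (Fin (m + 1)) :=
  Setoid.ker (fun x : Fin (m + 1) =>
    if hx : (x : ℕ) < m then some (⟦⟨x, hx⟩⟧ : Quotient s₀) else none)

/-- Extend a setoid on `Fin m` to `Fin (m+1)` by putting `m` in the class `c`. -/
def extSome {m : ℕ} (s₀ : Setoid (Fin m)) (c : Quotient s₀) : Setoid (Fin (m + 1)) :=
  Setoid.ker (fun x : Fin (m + 1) =>
    if hx : (x : ℕ) < m then (⟦⟨x, hx⟩⟧ : Quotient s₀) else c)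

lemma card_quotient_extNone {m : ℕ} (s₀ : Setoid (Fin m)) :
    Nat.card (Quotient (extNone s₀)) = Nat.card (Quotient s₀) + 1 := by
  have hsurj : Function.Surjective (fun x : Fin (m + 1) =>
      if hx : (x : ℕ) < m then some (⟦⟨x, hx⟩⟧ : Quotient s₀) else none) := by
    rintro (_ | c)
    · exact ⟨Fin.last m, by simp⟩
    · obtain ⟨a, rfl⟩ := Quotient.exists_rep c
      refine ⟨Fin.castSucc a, ?_⟩
      simp only [Fin.coe_castSucc, a.isLt, dif_pos]
  exact (Nat.card_congr (Setoid.quotientKerEquivOfSurjective _ hsurj)).trans (nat_card_option _)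

lemma card_quotient_extSome {m : ℕ} (s₀ : Setoid (Fin m)) (c : Quotient s₀) :
    Nat.card (Quotient (extSome s₀ c)) = Nat.card (Quotient s₀) := by
  have hsurj : Function.Surjective (fun x : Fin (m + 1) =>
      if hx : (x : ℕ) < m then (⟦⟨x, hx⟩⟧ : Quotient s₀) else c) := by
    intro q
    obtain ⟨a, rfl⟩ := Quotient.exists_rep q
    refine ⟨Fin.castSucc a, ?_⟩
    simp only [Fin.coe_castSucc, a.isLt, dif_pos]
  exact Nat.card_congr (Setoid.quotientKerEquivOfSurjective _ hsurj)

lemma extS_none_iff {m K : ℕ} (hm : m < K) (s₀ : Setoid (Fin m)) (s : Setoid (Fin K)) :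
    (ExtS hm.le s s₀ ∧ ∀ a : Fin m, ¬ s.r ⟨m, hm⟩ (Fin.castLE hm.le a)) ↔
      ExtS hm s (extNone s₀) := by
  have hcast : ∀ (a : Fin m), Fin.castLE hm (Fin.castSucc a) = Fin.castLE hm.le a :=
    fun a => rfl
  have hlast : Fin.castLE hm (Fin.last m) = (⟨m, hm⟩ : Fin K) := rfl
  constructor
  · rintro ⟨hext, hnew⟩ x y
    rw [show (extNone s₀) x y ↔ _ from Setoid.ker_def]
    by_cases hx : (x : ℕ) < m <;> by_cases hy : (y : ℕ) < m
    · have ex : x = Fin.castSucc ⟨x, hx⟩ := Fin.ext rfl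
      have ey : y = Fin.castSucc ⟨y, hy⟩ := Fin.ext rfl
      rw [ex, ey, hcast, hcast]
      simp only [dif_pos hx, dif_pos hy, Fin.coe_castSucc, Option.some.injEq, Quotient.eq]
      exact (hext _ _).trans ⟨fun h => h, fun h => h⟩
    · have ex : x = Fin.castSucc ⟨x, hx⟩ := Fin.ext rfl
      have ey : y = Fin.last m := Fin.ext (by
        simp only [Fin.val_last]
        omega)
      rw [ex, ey, hcast, hlast]
      simp only [dif_pos hx, Fin.val_last, lt_irrefl, dif_neg (lt_irrefl m), Fin.coe_castSucc]
      exact iff_of_false (fun h => hnew ⟨x, hx⟩ (s.symm h)) (by simp)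
    · have ex : x = Fin.last m := Fin.ext (by
        simp only [Fin.val_last]
        omega)
      have ey : y = Fin.castSucc ⟨y, hy⟩ := Fin.ext rfl
      rw [ex, ey, hcast, hlast]
      simp only [dif_pos hy, Fin.val_last, dif_neg (lt_irrefl m), Fin.coe_castSucc]
      exact iff_of_false (fun h => hnew ⟨y, hy⟩ h) (by simp)
    · have exy : x = y := Fin.ext (by omega)
      subst exy
      exact iff_of_true (s.refl _) rfl
  · intro hext
    constructor
    · intro a b
      have := hext (Fin.castSucc a) (Fin.castSucc b)
      rw [hcast, hcast, show (extNone s₀) _ _ ↔ _ from Setoid.ker_def] at this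
      simp [Fin.coe_castSucc, a.isLt, b.isLt] at this
      exact this.trans Quotient.eq
    · intro a hra
      have := (hext (Fin.last m) (Fin.castSucc a)).mp (by rw [hcast, hlast]; exact hra)
      rw [show (extNone s₀) _ _ ↔ _ from Setoid.ker_def] at this
      simp [Fin.coe_castSucc, a.isLt] at this

lemma extS_some_iff {m K : ℕ} (hm : m < K) (s₀ : Setoid (Fin m)) (c : Quotient s₀)
    (s : Setoid (Fin K)) :
    (ExtS hm.le s s₀ ∧ ∃ a : Fin m, s.r ⟨m, hm⟩ (Fin.castLE hm.le a) ∧ ⟦a⟧ = c) ↔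
      ExtS hm s (extSome s₀ c) := by
  have hcast : ∀ (a : Fin m), Fin.castLE hm (Fin.castSucc a) = Fin.castLE hm.le a :=
    fun a => rfl
  have hlast : Fin.castLE hm (Fin.last m) = (⟨m, hm⟩ : Fin K) := rfl
  constructor
  · rintro ⟨hext, a₀, ha₀, hc⟩ x y
    rw [show (extSome s₀ c) x y ↔ _ from Setoid.ker_def]
    by_cases hx : (x : ℕ) < m <;> by_cases hy : (y : ℕ) < m
    · have ex : x = Fin.castSucc ⟨x, hx⟩ := Fin.ext rfl
      have ey : y = Fin.castSucc ⟨y, hy⟩ := Fin.ext rfl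
      rw [ex, ey, hcast, hcast]
      simp only [dif_pos hx, dif_pos hy, Fin.coe_castSucc, Quotient.eq]
      exact (hext _ _).trans ⟨fun h => h, fun h => h⟩
    · have ex : x = Fin.castSucc ⟨x, hx⟩ := Fin.ext rfl
      have ey : y = Fin.last m := Fin.ext (by
        simp only [Fin.val_last]
        omega)
      rw [ex, ey, hcast, hlast]
      simp only [dif_pos hx, Fin.val_last, dif_neg (lt_irrefl m), Fin.coe_castSucc]
      rw [← hc]
      constructor
      · intro h
        have : s.r (Fin.castLE hm.le ⟨x, hx⟩) (Fin.castLE hm.le a₀) := s.trans h ha₀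
        exact Quotient.sound ((hext _ _).mp this)
      · intro h
        have : s.r (Fin.castLE hm.le ⟨x, hx⟩) (Fin.castLE hm.le a₀) :=
          (hext _ _).mpr (Quotient.exact h)
        exact s.trans this (s.symm ha₀)
    · have ex : x = Fin.last m := Fin.ext (by
        simp only [Fin.val_last]
        omega)
      have ey : y = Fin.castSucc ⟨y, hy⟩ := Fin.ext rfl
      rw [ex, ey, hcast, hlast]
      simp only [dif_pos hy, Fin.val_last, dif_neg (lt_irrefl m), Fin.coe_castSucc]
      rw [← hc]
      constructor
      · intro h
        have : s.r (Fin.castLE hm.le ⟨y, hy⟩) (Fin.castLE hm.le a₀) :=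
          s.trans (s.symm h) ha₀
        exact (Quotient.sound ((hext _ _).mp this)).symm
      · intro h
        have : s.r (Fin.castLE hm.le ⟨y, hy⟩) (Fin.castLE hm.le a₀) :=
          (hext _ _).mpr (Quotient.exact h.symm)
        exact s.symm (s.trans this (s.symm ha₀))
    · have exy : x = y := Fin.ext (by omega)
      subst exy
      exact iff_of_true (s.refl _) rfl
  · intro hext
    have hres : ExtS hm.le s s₀ := by
      intro a b
      have := hext (Fin.castSucc a) (Fin.castSucc b)
      rw [hcast, hcast, show (extSome s₀ c) _ _ ↔ _ from Setoid.ker_def] at this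
      simp [Fin.coe_castSucc, a.isLt, b.isLt] at this
      exact this.trans Quotient.eq
    refine ⟨hres, ?_⟩
    obtain ⟨a, ha⟩ := Quotient.exists_rep c
    refine ⟨a, ?_, ha⟩
    have := (hext (Fin.last m) (Fin.castSucc a))
    rw [hcast, hlast, show (extSome s₀ c) _ _ ↔ _ from Setoid.ker_def] at this
    apply this.mpr
    simp [Fin.coe_castSucc, a.isLt, dif_neg (lt_irrefl m), ha]

lemma count_ext : ∀ (d m K : ℕ) (h : m + d = K) (s₀ : Setoid (Fin m)),
    Nat.card {s : Setoid (Fin K) // ExtS (by omega : m ≤ K) s s₀} =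
      rbell d (Nat.card (Quotient s₀)) := by
  intro d
  induction d with
  | zero =>
    intro m K h s₀
    obtain rfl : m = K := by omega
    rw [rbell_zero]
    have huniq : ∀ s : Setoid (Fin m), ExtS (by omega : m ≤ m) s s₀ ↔ s = s₀ := by
      intro s
      constructor
      · intro hs
        refine Setoid.ext fun a b => ?_
        have := hs a b
        rwa [show Fin.castLE (by omega) a = a from Fin.ext rfl,
          show Fin.castLE (by omega) b = b from Fin.ext rfl] at this
      · rintro rfl a b
        rw [show Fin.castLE (by omega) a = a from Fin.ext rfl,
          show Fin.castLE (by omega) b = b from Fin.ext rfl]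
    rw [Nat.card_congr (Equiv.subtypeEquivRight huniq)]
    haveI : Unique {s : Setoid (Fin m) // s = s₀} := ⟨⟨⟨s₀, rfl⟩⟩, fun x => Subtype.ext x.2⟩
    exact Nat.card_unique
  | succ d ih =>
    intro m K h s₀
    classical
    have hm : m < K := by omega
    letI : Fintype (Quotient s₀) := Fintype.ofFinite _
    set n := Nat.card (Quotient s₀) with hn
    let cl : {s : Setoid (Fin K) // ExtS hm.le s s₀} → Option (Quotient s₀) :=
      fun sp => if hx : ∃ a : Fin m, sp.1.r ⟨m, hm⟩ (Fin.castLE hm.le a)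
        then some ⟦hx.choose⟧ else none
    have hcard : Nat.card {s : Setoid (Fin K) // ExtS hm.le s s₀} =
        ∑ o : Option (Quotient s₀),
          Nat.card {x : {s : Setoid (Fin K) // ExtS hm.le s s₀} // cl x = o} := by
      rw [← nat_card_sigma]
      exact (Nat.card_congr (Equiv.sigmaFiberEquiv cl)).symm
    have hfib_none : Nat.card {x : {s : Setoid (Fin K) // ExtS hm.le s s₀} // cl x = none} =
        rbell d (n + 1) := by
      have key : ∀ x : {s : Setoid (Fin K) // ExtS hm.le s s₀},
          cl x = none ↔ ExtS hm x.1 (extNone s₀) := by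
        intro x
        rw [← extS_none_iff hm s₀ x.1]
        show (if hx : ∃ a : Fin m, x.1.r ⟨m, hm⟩ (Fin.castLE hm.le a)
          then some ⟦hx.choose⟧ else none) = none ↔ _
        split_ifs with hx
        · exact iff_of_false (by simp) (fun hh => hh.2 hx.choose hx.choose_spec)
        · exact iff_of_true rfl ⟨x.2, fun a ha => hx ⟨a, ha⟩⟩
      have e1 : {x : {s : Setoid (Fin K) // ExtS hm.le s s₀} // cl x = none} ≃
          {s : Setoid (Fin K) // ExtS hm s (extNone s₀)} :=
        { toFun := fun x => ⟨x.1.1, (key x.1).mp x.2⟩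
          invFun := fun y => ⟨⟨y.1, ((extS_none_iff hm s₀ y.1).mpr y.2).1⟩, (key _).mpr y.2⟩
          left_inv := fun x => Subtype.ext (Subtype.ext rfl)
          right_inv := fun y => Subtype.ext rfl }
      rw [Nat.card_congr e1, ih (m+1) K (by omega) (extNone s₀), card_quotient_extNone]
    have hfib_some : ∀ c : Quotient s₀,
        Nat.card {x : {s : Setoid (Fin K) // ExtS hm.le s s₀} // cl x = some c} =
          rbell d n := by
      intro c
      have key : ∀ x : {s : Setoid (Fin K) // ExtS hm.le s s₀},
          cl x = some c ↔ ExtS hm x.1 (extSome s₀ c) := by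
        intro x
        rw [← extS_some_iff hm s₀ c x.1]
        show (if hx : ∃ a : Fin m, x.1.r ⟨m, hm⟩ (Fin.castLE hm.le a)
          then some ⟦hx.choose⟧ else none) = some c ↔ _
        split_ifs with hx
        · simp only [Option.some.injEq]
          constructor
          · rintro rfl
            exact ⟨x.2, hx.choose, hx.choose_spec, rfl⟩
          · rintro ⟨-, a, ha, rfl⟩
            have h1 := hx.choose_spec
            have h2 : x.1.r (Fin.castLE hm.le hx.choose) (Fin.castLE hm.le a) :=
              x.1.trans (x.1.symm h1) ha
            exact Quotient.sound ((x.2 _ _).mp h2)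
        · exact iff_of_false (by simp)
            (fun hh => hx ⟨hh.2.choose, hh.2.choose_spec.1⟩)
      have e1 : {x : {s : Setoid (Fin K) // ExtS hm.le s s₀} // cl x = some c} ≃
          {s : Setoid (Fin K) // ExtS hm s (extSome s₀ c)} :=
        { toFun := fun x => ⟨x.1.1, (key x.1).mp x.2⟩
          invFun := fun y => ⟨⟨y.1, ((extS_some_iff hm s₀ c y.1).mpr y.2).1⟩, (key _).mpr y.2⟩
          left_inv := fun x => Subtype.ext (Subtype.ext rfl)
          right_inv := fun y => Subtype.ext rfl }
      rw [Nat.card_congr e1, ih (m+1) K (by omega) (extSome s₀ c), card_quotient_extSome]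
    calc Nat.card {s : Setoid (Fin K) // ExtS (by omega : m ≤ K) s s₀}
        = ∑ o : Option (Quotient s₀),
          Nat.card {x : {s : Setoid (Fin K) // ExtS hm.le s s₀} // cl x = o} := hcard
      _ = rbell d (n + 1) + ∑ c : Quotient s₀,
          Nat.card {x : {s : Setoid (Fin K) // ExtS hm.le s s₀} // cl x = some c} := by
          rw [Fintype.sum_option, hfib_none]
      _ = rbell d (n + 1) + n * rbell d n := by
          rw [Finset.sum_congr rfl (fun c _ => hfib_some c), Finset.sum_const, card_univ,
            smul_eq_mul, ← Nat.card_eq_fintype_card]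
      _ = rbell (d + 1) n := (rbell_succ d n).symm
/-- Two elements are in the same block of the partition `ρ`. -/
def SamePart {K : ℕ} (ρ : Finpartition (Finset.univ : Finset (Fin K))) (i j : Fin K) : Prop :=
  ∃ b ∈ ρ.parts, i ∈ b ∧ j ∈ b

/-- `ρ`, a partition of `{1, …, K}`, extends `σ`, a partition of `{1, …, j}`: restricted to
the first `j` elements, `ρ` induces exactly the same-block relation of `σ`. -/
def ExtendsPart {j K : ℕ} (h : j ≤ K) (ρ : Finpartition (Finset.univ : Finset (Fin K)))
    (σ : Finpartition (Finset.univ : Finset (Fin j))) : Prop :=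
  ∀ a b : Fin j, SamePart ρ (Fin.castLE h a) (Fin.castLE h b) ↔ SamePart σ a b

/-- Under the uniform prior over partitions of `{1, …, K}`, conditional
on the first `j` elements forming `ℓ` distinct blocks (a fixed partition `σ`), the number
of partitions of `{1, …, K}` extending `σ` in which element `j+1` is in a new block is
`B_{K−j−1, ℓ+1}`, the number in which it joins a specified existing block is
`B_{K−j−1, ℓ}`, and hence the probability that element `j+1` starts a new block is
`B_{K−j−1, ℓ+1} / (B_{K−j−1, ℓ+1} + ℓ · B_{K−j−1, ℓ})`. -/
theorem uniform_prior_new_block (K j ℓ : ℕ) (hjK : j < K)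
    (σ : Finpartition (Finset.univ : Finset (Fin j))) (hσ : σ.parts.card = ℓ) :
    Nat.card {ρ : Finpartition (Finset.univ : Finset (Fin K)) //
        ExtendsPart hjK.le ρ σ ∧
          ∀ a : Fin j, ¬ SamePart ρ ⟨j, hjK⟩ (Fin.castLE hjK.le a)} =
      rbell (K - j - 1) (ℓ + 1) ∧
    (∀ b ∈ σ.parts,
      Nat.card {ρ : Finpartition (Finset.univ : Finset (Fin K)) //
          ExtendsPart hjK.le ρ σ ∧
            ∃ a ∈ b, SamePart ρ ⟨j, hjK⟩ (Fin.castLE hjK.le a)} =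
        rbell (K - j - 1) ℓ) ∧
    ((Nat.card {ρ : Finpartition (Finset.univ : Finset (Fin K)) //
          ExtendsPart hjK.le ρ σ ∧
            ∀ a : Fin j, ¬ SamePart ρ ⟨j, hjK⟩ (Fin.castLE hjK.le a)} : ℝ) /
        (Nat.card {ρ : Finpartition (Finset.univ : Finset (Fin K)) //
          ExtendsPart hjK.le ρ σ} : ℝ) =
      (rbell (K - j - 1) (ℓ + 1) : ℝ) /
        ((rbell (K - j - 1) (ℓ + 1) : ℝ) + ℓ * (rbell (K - j - 1) ℓ : ℝ))) := by
  classical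
  have hd1 : (j + 1) + (K - j - 1) = K := by omega
  have hd0 : j + (K - j) = K := by omega
  set s₀ : Setoid (Fin j) := partSetoid σ with hs₀
  have hcard₀ : Nat.card (Quotient s₀) = ℓ := by
    rw [hs₀, card_quotient_partSetoid, hσ]
  have hsame : ∀ (ρ : Finpartition (Finset.univ : Finset (Fin K))) (i j' : Fin K),
      SamePart ρ i j' ↔ (partSetoid ρ).r i j' := fun _ _ _ => Iff.rfl
  -- the global equivalence
  have hA : Nat.card {ρ : Finpartition (Finset.univ : Finset (Fin K)) //
      ExtendsPart hjK.le ρ σ ∧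
        ∀ a : Fin j, ¬ SamePart ρ ⟨j, hjK⟩ (Fin.castLE hjK.le a)} =
      rbell (K - j - 1) (ℓ + 1) := by
    have e1 : {ρ : Finpartition (Finset.univ : Finset (Fin K)) //
        ExtendsPart hjK.le ρ σ ∧
          ∀ a : Fin j, ¬ SamePart ρ ⟨j, hjK⟩ (Fin.castLE hjK.le a)} ≃
        {s : Setoid (Fin K) // ExtS hjK.le s s₀ ∧
          ∀ a : Fin j, ¬ s.r ⟨j, hjK⟩ (Fin.castLE hjK.le a)} :=
      Equiv.subtypeEquiv finpartitionEquivSetoid (fun ρ => Iff.rfl)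
    have e2 : {s : Setoid (Fin K) // ExtS hjK.le s s₀ ∧
          ∀ a : Fin j, ¬ s.r ⟨j, hjK⟩ (Fin.castLE hjK.le a)} ≃
        {s : Setoid (Fin K) // ExtS hjK s (extNone s₀)} :=
      Equiv.subtypeEquivRight (fun s => extS_none_iff hjK s₀ s)
    rw [Nat.card_congr (e1.trans e2), count_ext (K - j - 1) (j + 1) K hd1 (extNone s₀),
      card_quotient_extNone, hcard₀]
  have hB : ∀ b ∈ σ.parts,
      Nat.card {ρ : Finpartition (Finset.univ : Finset (Fin K)) //
          ExtendsPart hjK.le ρ σ ∧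
            ∃ a ∈ b, SamePart ρ ⟨j, hjK⟩ (Fin.castLE hjK.le a)} =
        rbell (K - j - 1) ℓ := by
    intro b hb
    obtain ⟨a₀, ha₀⟩ := σ.nonempty_of_mem_parts hb
    set c : Quotient s₀ := ⟦a₀⟧ with hc
    have hmemb : ∀ a : Fin j, a ∈ b ↔ (⟦a⟧ : Quotient s₀) = c := by
      intro a
      constructor
      · intro hab
        exact (Quotient.sound (Setoid.symm ⟨b, hb, ha₀, hab⟩ : s₀.r a a₀))
      · intro hq
        have hr : s₀.r a₀ a := Setoid.symm (Quotient.exact hq)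
        obtain ⟨t, ht, h1, h2⟩ := hr
        rwa [Finpartition.eq_of_mem_parts σ ht hb h1 ha₀] at h2
    have e1 : {ρ : Finpartition (Finset.univ : Finset (Fin K)) //
        ExtendsPart hjK.le ρ σ ∧
          ∃ a ∈ b, SamePart ρ ⟨j, hjK⟩ (Fin.castLE hjK.le a)} ≃
        {s : Setoid (Fin K) // ExtS hjK.le s s₀ ∧
          ∃ a ∈ b, s.r ⟨j, hjK⟩ (Fin.castLE hjK.le a)} :=
      Equiv.subtypeEquiv finpartitionEquivSetoid (fun ρ => Iff.rfl)
    have e2 : {s : Setoid (Fin K) // ExtS hjK.le s s₀ ∧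
          ∃ a ∈ b, s.r ⟨j, hjK⟩ (Fin.castLE hjK.le a)} ≃
        {s : Setoid (Fin K) // ExtS hjK s (extSome s₀ c)} := by
      refine Equiv.subtypeEquivRight (fun s => ?_)
      rw [← extS_some_iff hjK s₀ c s]
      constructor
      · rintro ⟨hext, a, hab, har⟩
        exact ⟨hext, a, har, (hmemb a).mp hab⟩
      · rintro ⟨hext, a, har, haq⟩
        exact ⟨hext, a, (hmemb a).mpr haq, har⟩
    rw [Nat.card_congr (e1.trans e2), count_ext (K - j - 1) (j + 1) K hd1 (extSome s₀ c),
      card_quotient_extSome, hcard₀]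
  have hC : Nat.card {ρ : Finpartition (Finset.univ : Finset (Fin K)) //
      ExtendsPart hjK.le ρ σ} =
      rbell (K - j - 1) (ℓ + 1) + ℓ * rbell (K - j - 1) ℓ := by
    have e1 : {ρ : Finpartition (Finset.univ : Finset (Fin K)) // ExtendsPart hjK.le ρ σ} ≃
        {s : Setoid (Fin K) // ExtS hjK.le s s₀} :=
      Equiv.subtypeEquiv finpartitionEquivSetoid (fun ρ => Iff.rfl)
    rw [Nat.card_congr e1, count_ext (K - j) j K hd0 s₀, hcard₀]
    obtain ⟨d, hd⟩ : ∃ d, K - j = d + 1 := ⟨K - j - 1, by omega⟩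
    have h2 : K - j - 1 = d := by omega
    rw [h2, hd, rbell_succ]
  refine ⟨hA, hB, ?_⟩
  rw [hA, hC]
  push_cast
  ring
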